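/- For every ρ₊ > 0 there exists a constant c > 0 (depending only on ρ₊, Γ₋, Γ₊ and g) such that the following holds: for every ρ ∈ [0, ρ₊] and φ ≥ 0 with R(φ) = ρ, every ε ∈ (0,1], every n ∈ ℕ, and every family X₁, …, Xₙ of independent random variables each with distribution ν_φ, one has P[Σ_{k=1}^n X_k ≤ (ρ − ε)n] ≤ e^{−c ε² n}. -/

import Mathlib

open MeasureTheory ProbabilityTheory

/-- The "generalized factorial" `g(k)! = g(k) ⋯ g(1)`, with `g(0)! = 1`. -/
noncomputable def gFact (g : ℕ → ℝ) : ℕ → ℝ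
  | 0 => 1
  | n + 1 => g (n + 1) * gFact g n

/-- The partition function `Z(φ) = Σ_{k=0}^∞ φ^k / g(k)!`. -/
noncomputable def Zfun (g : ℕ → ℝ) (φ : ℝ) : ℝ := ∑' k : ℕ, φ ^ k / gFact g k

/-- The measure `ν_φ` on `ℕ`, given by `ν_φ(k) = φ^k / (g(k)!·Z(φ))`.
For `φ = 0` this is the Dirac mass at `0`. -/
noncomputable def nuMeasure (g : ℕ → ℝ) (φ : ℝ) : Measure ℕ :=
  Measure.sum fun k =>
    (ENNReal.ofReal (φ ^ k / (gFact g k * Zfun g φ))) • Measure.dirac k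

/-- The mean `R(φ) = (1/Z(φ)) Σ_{k=0}^∞ k φ^k / g(k)!` of `ν_φ`. -/
noncomputable def Rfun (g : ℕ → ℝ) (φ : ℝ) : ℝ :=
  (∑' k : ℕ, (k : ℝ) * φ ^ k / gFact g k) / Zfun g φ

lemma div_le_div_of_nonneg_right' {a b c : ℝ} (h : a ≤ b) (hc : 0 < c) : a / c ≤ b / c := by
  gcongr

section Helpers

variable {g : ℕ → ℝ} {Γm Γp : ℝ}

lemma g_lb (hΓm : 0 < Γm) (hg0 : g 0 = 0)
    (hg : ∀ k : ℕ, 1 ≤ k → Γm ≤ g k - g (k - 1) ∧ g k - g (k - 1) ≤ Γp) :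
    ∀ k : ℕ, Γm * k ≤ g k := by
  intro k
  induction k with
  | zero => simp [hg0]
  | succ n ih =>
    have h := (hg (n + 1) (Nat.le_add_left 1 n)).1
    simp only [Nat.add_sub_cancel] at h
    push_cast
    nlinarith

lemma g_ub (hΓp : 0 ≤ Γp) (hg0 : g 0 = 0)
    (hg : ∀ k : ℕ, 1 ≤ k → Γm ≤ g k - g (k - 1) ∧ g k - g (k - 1) ≤ Γp) :
    ∀ k : ℕ, g k ≤ Γp * k := by
  intro k
  induction k with
  | zero => simp [hg0]
  | succ n ih =>
    have h := (hg (n + 1) (Nat.le_add_left 1 n)).2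
    simp only [Nat.add_sub_cancel] at h
    push_cast
    nlinarith

lemma gFact_lb (hΓm : 0 < Γm) (hg0 : g 0 = 0)
    (hg : ∀ k : ℕ, 1 ≤ k → Γm ≤ g k - g (k - 1) ∧ g k - g (k - 1) ≤ Γp) :
    ∀ k : ℕ, Γm ^ k * (k.factorial : ℝ) ≤ gFact g k := by
  intro k
  induction k with
  | zero => simp [gFact]
  | succ n ih =>
    have h1 : Γm * (n + 1 : ℕ) ≤ g (n + 1) := g_lb hΓm hg0 hg (n + 1)
    have h2 : (0:ℝ) < Γm ^ n * n.factorial := by positivity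
    have h3 : (0:ℝ) ≤ Γm * ((n:ℝ) + 1) := by positivity
    show Γm ^ (n+1) * ((n+1).factorial : ℝ) ≤ g (n + 1) * gFact g n
    rw [Nat.factorial_succ]
    push_cast at h1 ⊢
    calc Γm ^ (n+1) * (((n:ℝ) + 1) * (n.factorial : ℝ))
        = (Γm * ((n:ℝ)+1)) * (Γm ^ n * (n.factorial : ℝ)) := by ring
      _ ≤ g (n+1) * gFact g n := by
          apply mul_le_mul h1 ih (le_of_lt h2) ((h3.trans h1).trans (le_refl _))

lemma gFact_pos (hΓm : 0 < Γm) (hg0 : g 0 = 0)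
    (hg : ∀ k : ℕ, 1 ≤ k → Γm ≤ g k - g (k - 1) ∧ g k - g (k - 1) ≤ Γp)
    (k : ℕ) : 0 < gFact g k :=
  lt_of_lt_of_le (by positivity) (gFact_lb hΓm hg0 hg k)

lemma sq_le_two_pow (k : ℕ) : ((k:ℝ))^2 ≤ 2 * 2 ^ k := by
  induction k with
  | zero => norm_num
  | succ n ih =>
    have h : (n : ℝ) + 1 ≤ 2 ^ n := by
      exact_mod_cast (Nat.lt_two_pow_self (n := n))
    have hp : (2:ℝ) ^ (n + 1) = 2 * 2 ^ n := by rw [pow_succ]; ring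
    push_cast
    rw [hp]
    nlinarith [pow_nonneg (by norm_num : (0:ℝ) ≤ 2) n]

lemma summable_sq_pow_div_factorial {x : ℝ} (hx : 0 ≤ x) :
    Summable (fun k : ℕ => ((k:ℝ))^2 * x ^ k / k.factorial) := by
  have hs : Summable (fun k : ℕ => 2 * (2*x) ^ k / k.factorial) := by
    simpa [mul_div_assoc] using (Real.summable_pow_div_factorial (2*x)).mul_left 2
  refine Summable.of_nonneg_of_le (fun k => by positivity) (fun k => ?_) hs
  have h1 : ((k:ℝ))^2 * x ^ k ≤ 2 * (2*x)^k := by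
    calc ((k:ℝ))^2 * x ^ k ≤ (2 * 2 ^ k) * x ^ k :=
          mul_le_mul_of_nonneg_right (sq_le_two_pow k) (by positivity)
      _ = 2 * (2*x)^k := by rw [mul_pow]; ring
  exact div_le_div_of_nonneg_right' h1 (by positivity)

lemma summable_lin_pow_div_factorial {x : ℝ} (hx : 0 ≤ x) :
    Summable (fun k : ℕ => (k:ℝ) * x ^ k / k.factorial) := by
  have hs : Summable (fun k : ℕ => ((k:ℝ))^2 * x ^ k / k.factorial + x ^ k / k.factorial) :=
    (summable_sq_pow_div_factorial hx).add (Real.summable_pow_div_factorial x)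
  refine Summable.of_nonneg_of_le (fun k => by positivity) (fun k => ?_) hs
  have h1 : (k:ℝ) * x ^ k ≤ ((k:ℝ)^2 + 1) * x ^ k := by
    have : (k:ℝ) ≤ (k:ℝ)^2 + 1 := by nlinarith [sq_nonneg ((k:ℝ) - 1)]
    exact mul_le_mul_of_nonneg_right this (by positivity)
  calc (k:ℝ) * x ^ k / k.factorial ≤ ((k:ℝ)^2 + 1) * x ^ k / k.factorial :=
        div_le_div_of_nonneg_right' h1 (by positivity)
    _ = ((k:ℝ))^2 * x ^ k / k.factorial + x ^ k / k.factorial := by ring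

end Helpers

section Nu

variable {g : ℕ → ℝ} {Γm Γp φ : ℝ}

lemma term_le (hΓm : 0 < Γm) (hg0 : g 0 = 0)
    (hg : ∀ k : ℕ, 1 ≤ k → Γm ≤ g k - g (k - 1) ∧ g k - g (k - 1) ≤ Γp)
    (hφ : 0 ≤ φ) (k : ℕ) :
    φ ^ k / gFact g k ≤ (φ / Γm) ^ k / k.factorial := by
  have h1 := gFact_lb hΓm hg0 hg k
  have h2 : (0:ℝ) < Γm ^ k * k.factorial := by positivity
  have h3 := pow_nonneg hφ k
  calc φ ^ k / gFact g k ≤ φ ^ k / (Γm ^ k * k.factorial) := by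
        gcongr
    _ = (φ / Γm) ^ k / k.factorial := by
        rw [div_pow, div_div]

lemma summable_Zterm (hΓm : 0 < Γm) (hg0 : g 0 = 0)
    (hg : ∀ k : ℕ, 1 ≤ k → Γm ≤ g k - g (k - 1) ∧ g k - g (k - 1) ≤ Γp)
    (hφ : 0 ≤ φ) :
    Summable (fun k : ℕ => φ ^ k / gFact g k) := by
  refine Summable.of_nonneg_of_le
    (fun k => div_nonneg (pow_nonneg hφ k) (gFact_pos hΓm hg0 hg k).le)
    (term_le hΓm hg0 hg hφ) (Real.summable_pow_div_factorial (φ / Γm))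

lemma summable_mean (hΓm : 0 < Γm) (hg0 : g 0 = 0)
    (hg : ∀ k : ℕ, 1 ≤ k → Γm ≤ g k - g (k - 1) ∧ g k - g (k - 1) ≤ Γp)
    (hφ : 0 ≤ φ) :
    Summable (fun k : ℕ => (k : ℝ) * φ ^ k / gFact g k) := by
  refine Summable.of_nonneg_of_le
    (fun k => div_nonneg (mul_nonneg (Nat.cast_nonneg k) (pow_nonneg hφ k))
      (gFact_pos hΓm hg0 hg k).le)
    (fun k => ?_) (summable_lin_pow_div_factorial (div_nonneg hφ hΓm.le))
  rw [mul_div_assoc, mul_div_assoc]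
  exact mul_le_mul_of_nonneg_left (term_le hΓm hg0 hg hφ k) (Nat.cast_nonneg k)

lemma summable_sq (hΓm : 0 < Γm) (hg0 : g 0 = 0)
    (hg : ∀ k : ℕ, 1 ≤ k → Γm ≤ g k - g (k - 1) ∧ g k - g (k - 1) ≤ Γp)
    (hφ : 0 ≤ φ) :
    Summable (fun k : ℕ => ((k : ℝ))^2 * φ ^ k / gFact g k) := by
  refine Summable.of_nonneg_of_le
    (fun k => div_nonneg (mul_nonneg (sq_nonneg ((k:ℝ))) (pow_nonneg hφ k))
      (gFact_pos hΓm hg0 hg k).le)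
    (fun k => ?_) (summable_sq_pow_div_factorial (div_nonneg hφ hΓm.le))
  rw [mul_div_assoc, mul_div_assoc]
  exact mul_le_mul_of_nonneg_left (term_le hΓm hg0 hg hφ k) (by positivity)

lemma Z_ge_one (hΓm : 0 < Γm) (hg0 : g 0 = 0)
    (hg : ∀ k : ℕ, 1 ≤ k → Γm ≤ g k - g (k - 1) ∧ g k - g (k - 1) ≤ Γp)
    (hφ : 0 ≤ φ) : 1 ≤ Zfun g φ := by
  have h := Summable.le_tsum (summable_Zterm hΓm hg0 hg hφ) 0
    (fun j _ => div_nonneg (pow_nonneg hφ j) (gFact_pos hΓm hg0 hg j).le)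
  simpa [gFact, Zfun] using h

lemma phi_le_R (hΓm : 0 < Γm) (hΓp : 0 < Γp) (hg0 : g 0 = 0)
    (hg : ∀ k : ℕ, 1 ≤ k → Γm ≤ g k - g (k - 1) ∧ g k - g (k - 1) ≤ Γp)
    (hφ : 0 ≤ φ) : φ ≤ Γp * Rfun g φ := by
  have hZ1 : 1 ≤ Zfun g φ := Z_ge_one hΓm hg0 hg hφ (Γp := Γp)
  have hZ : 0 < Zfun g φ := lt_of_lt_of_le one_pos hZ1
  have hN : Summable (fun k : ℕ => (k : ℝ) * φ ^ k / gFact g k) :=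
    summable_mean hΓm hg0 hg hφ
  have hZs := summable_Zterm hΓm hg0 hg hφ (Γp := Γp)
  have hterm : ∀ k : ℕ, φ / Γp * (φ ^ k / gFact g k) ≤
      ((k + 1 : ℕ) : ℝ) * φ ^ (k + 1) / gFact g (k + 1) := by
    intro k
    have hgub : g (k + 1) ≤ Γp * ((k:ℝ) + 1) := by
      have h := g_ub hΓp.le hg0 hg (k + 1)
      push_cast at h
      linarith
    have hgpos : 0 < g (k + 1) := by
      have h := g_lb hΓm hg0 hg (k + 1)
      push_cast at h
      nlinarith [Nat.cast_nonneg (α := ℝ) k]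
    have hgf : 0 < gFact g k := gFact_pos hΓm hg0 hg k
    have hrw : gFact g (k+1) = g (k+1) * gFact g k := rfl
    rw [hrw]
    push_cast
    have hnum : (0:ℝ) ≤ ((k:ℝ) + 1) * φ ^ (k+1) := by positivity
    calc φ / Γp * (φ ^ k / gFact g k)
        = ((k:ℝ) + 1) * φ ^ (k+1) / (Γp * ((k:ℝ) + 1) * gFact g k) := by
          rw [pow_succ]
          field_simp
      _ ≤ ((k:ℝ) + 1) * φ ^ (k+1) / (g (k+1) * gFact g k) := by
          gcongr
  have key : (φ / Γp) * Zfun g φ ≤ ∑' k : ℕ, (k : ℝ) * φ ^ k / gFact g k := by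
    have h1 : (φ / Γp) * Zfun g φ = ∑' k : ℕ, (φ / Γp) * (φ ^ k / gFact g k) :=
      tsum_mul_left.symm
    rw [h1, Summable.tsum_eq_zero_add hN]
    simp only [Nat.cast_zero, zero_mul, zero_div, zero_add]
    have hs2 : Summable (fun k : ℕ => (((k + 1 : ℕ)) : ℝ) * φ ^ (k+1) / gFact g (k+1)) :=
      (summable_nat_add_iff (f := fun n : ℕ => (n : ℝ) * φ ^ n / gFact g n) 1).mpr hN
    exact Summable.tsum_le_tsum hterm (hZs.mul_left (φ / Γp)) hs2
  have h2 : φ / Γp ≤ Rfun g φ := by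
    rw [Rfun, le_div_iff₀ hZ]
    exact key
  rw [div_le_iff₀ hΓp] at h2
  linarith [h2]

lemma nu_singleton (g : ℕ → ℝ) (φ : ℝ) (k : ℕ) :
    nuMeasure g φ {k} = ENNReal.ofReal (φ ^ k / (gFact g k * Zfun g φ)) := by
  rw [nuMeasure, Measure.sum_apply _ (measurableSet_singleton k)]
  rw [tsum_eq_single k ?_]
  · simp [Measure.smul_apply, Measure.dirac_apply_of_mem (Set.mem_singleton k)]
  · intro j hj
    simp [Measure.smul_apply,
      Measure.dirac_apply' _ (measurableSet_singleton k), Set.indicator,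
      Set.mem_singleton_iff, hj]

lemma nu_integral (hgf : ∀ k, 0 < gFact g k) (hZ : 0 < Zfun g φ) (hφ : 0 ≤ φ)
    {f : ℕ → ℝ} (hf0 : ∀ k, 0 ≤ f k)
    (hfs : Summable (fun k => f k * (φ ^ k / (gFact g k * Zfun g φ)))) :
    Integrable f (nuMeasure g φ) ∧
    ∫ k, f k ∂(nuMeasure g φ) = ∑' k, f k * (φ ^ k / (gFact g k * Zfun g φ)) := by
  set w : ℕ → ℝ := fun k => φ ^ k / (gFact g k * Zfun g φ) with hw
  have hw0 : ∀ k, 0 ≤ w k := fun k =>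
    div_nonneg (pow_nonneg hφ k) (mul_nonneg (hgf k).le hZ.le)
  have hint : Integrable f (nuMeasure g φ) := by
    constructor
    · exact (measurable_of_countable f).aestronglyMeasurable
    · show ∫⁻ a, (‖f a‖₊ : ENNReal) ∂(nuMeasure g φ) < ⊤
      rw [nuMeasure, lintegral_sum_measure]
      have heq : ∀ k : ℕ, ∫⁻ a, (‖f a‖₊ : ENNReal)
            ∂((ENNReal.ofReal (w k)) • Measure.dirac k)
          = ENNReal.ofReal (f k * w k) := by
        intro k
        rw [lintegral_smul_measure, lintegral_dirac,
          ← ENNReal.ofReal_coe_nnreal, coe_nnnorm, Real.norm_of_nonneg (hf0 k),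
          smul_eq_mul, ← ENNReal.ofReal_mul (hw0 k)]
        ring_nf
      rw [tsum_congr heq,
        ← ENNReal.ofReal_tsum_of_nonneg (fun k => mul_nonneg (hf0 k) (hw0 k)) hfs]
      exact ENNReal.ofReal_lt_top
  refine ⟨hint, ?_⟩
  rw [integral_countable' hint]
  refine tsum_congr fun k => ?_
  rw [measureReal_def, nu_singleton, ENNReal.toReal_ofReal (hw0 k), smul_eq_mul, mul_comm]

end Nu

lemma nu_prob {g : ℕ → ℝ} {Γm Γp φ : ℝ} (hΓm : 0 < Γm) (hg0 : g 0 = 0)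
    (hg : ∀ k : ℕ, 1 ≤ k → Γm ≤ g k - g (k - 1) ∧ g k - g (k - 1) ≤ Γp)
    (hφ : 0 ≤ φ) : IsProbabilityMeasure (nuMeasure g φ) := by
  have hZ : 0 < Zfun g φ := lt_of_lt_of_le one_pos (Z_ge_one hΓm hg0 hg hφ)
  have hgf : ∀ k, 0 < gFact g k := gFact_pos hΓm hg0 hg
  have hw0 : ∀ k : ℕ, 0 ≤ φ ^ k / (gFact g k * Zfun g φ) := fun k =>
    div_nonneg (pow_nonneg hφ k) (mul_nonneg (hgf k).le hZ.le)
  have hws : Summable (fun k : ℕ => φ ^ k / (gFact g k * Zfun g φ)) := by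
    have h := (summable_Zterm hΓm hg0 hg hφ (Γp := Γp)).div_const (Zfun g φ)
    simpa [div_div] using h
  constructor
  rw [nuMeasure, Measure.sum_apply _ MeasurableSet.univ]
  have heq : ∀ k : ℕ, ((ENNReal.ofReal (φ ^ k / (gFact g k * Zfun g φ))) •
      Measure.dirac k) Set.univ = ENNReal.ofReal (φ ^ k / (gFact g k * Zfun g φ)) := by
    intro k
    simp [Measure.smul_apply]
  rw [tsum_congr heq, ← ENNReal.ofReal_tsum_of_nonneg hw0 hws]
  have hsum1 : ∑' k : ℕ, φ ^ k / (gFact g k * Zfun g φ) = 1 := by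
    have h1 : ∑' k : ℕ, φ ^ k / (gFact g k * Zfun g φ)
        = (∑' k : ℕ, φ ^ k / gFact g k) / Zfun g φ := by
      rw [← tsum_div_const]
      exact tsum_congr fun k => by rw [div_div]
    rw [h1, ← Zfun, div_self hZ.ne']
  rw [hsum1, ENNReal.ofReal_one]

lemma exp_neg_le_quad {x : ℝ} (hx : 0 ≤ x) : Real.exp (-x) ≤ 1 - x + x ^ 2 := by
  have h1 : x + 1 ≤ Real.exp x := Real.add_one_le_exp x
  have h2 : 0 < Real.exp x := Real.exp_pos x
  have h3 : (0:ℝ) < 1 - x + x ^ 2 := by nlinarith [sq_nonneg (x - 1)]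
  rw [Real.exp_neg, inv_eq_one_div, div_le_iff₀ h2]
  nlinarith [mul_le_mul_of_nonneg_left h1 h3.le, pow_nonneg hx 3]

set_option maxHeartbeats 1000000 in
/-- lower concentration of the invariant measure. -/
theorem zrp_concentration_lower
    (g : ℕ → ℝ) (Γm Γp : ℝ)
    (hΓm : 0 < Γm) (hΓm1 : Γm ≤ 1) (hΓp : 1 ≤ Γp)
    (hg0 : g 0 = 0)
    (hg : ∀ k : ℕ, 1 ≤ k → Γm ≤ g k - g (k - 1) ∧ g k - g (k - 1) ≤ Γp)
    (ρp : ℝ) (hρp : 0 < ρp) :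
    ∃ c : ℝ, 0 < c ∧
      ∀ ρ : ℝ, ρ ∈ Set.Icc 0 ρp → ∀ φ : ℝ, 0 ≤ φ → Rfun g φ = ρ →
      ∀ ε : ℝ, ε ∈ Set.Ioc (0 : ℝ) 1 → ∀ n : ℕ,
      ∀ (Ω : Type) (_ : MeasurableSpace Ω) (P : Measure Ω), IsProbabilityMeasure P →
      ∀ X : Fin n → Ω → ℕ, (∀ i, Measurable (X i)) →
        iIndepFun X P →
        (∀ i, Measure.map (X i) P = nuMeasure g φ) →
        P {ω | ∑ i, (X i ω : ℝ) ≤ (ρ - ε) * n} ≤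
          ENNReal.ofReal (Real.exp (-c * ε ^ 2 * n)) := by
  classical
  have hΓp0 : (0:ℝ) < Γp := lt_of_lt_of_le one_pos hΓp
  set ap : ℝ := Γp * ρp / Γm with hap_def
  have hap : 0 ≤ ap := by positivity
  set S2 : ℝ := ∑' k : ℕ, ((k:ℝ))^2 * ap ^ k / k.factorial with hS2_def
  have hS20 : 0 ≤ S2 := tsum_nonneg fun k => by positivity
  set B : ℝ := S2 + 1 with hB_def
  have hB1 : 1 ≤ B := le_add_of_nonneg_left hS20
  have hB0 : 0 < B := lt_of_lt_of_le one_pos hB1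
  refine ⟨1 / (4 * B), by positivity, ?_⟩
  intro ρ hρ φ hφ hR ε hε n Ω mΩ P hP X hXm hXind hXmap
  obtain ⟨hε0, hε1⟩ := hε
  obtain ⟨hρ0, hρub⟩ := hρ
  -- basic facts about the measure ν
  have hgf : ∀ k, 0 < gFact g k := gFact_pos hΓm hg0 hg
  have hZ1 : 1 ≤ Zfun g φ := Z_ge_one hΓm hg0 hg hφ (Γp := Γp)
  have hZ : 0 < Zfun g φ := lt_of_lt_of_le one_pos hZ1
  have hφle : φ ≤ Γp * ρp := by
    have h := phi_le_R hΓm hΓp0 hg0 hg hφ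
    rw [hR] at h
    nlinarith
  have hφΓ : φ / Γm ≤ ap := by
    rw [hap_def]
    gcongr
  set lam : ℝ := ε / (2 * B) with hlam_def
  have hlam0 : 0 < lam := by positivity
  haveI hnuP : IsProbabilityMeasure (nuMeasure g φ) := nu_prob hΓm hg0 hg hφ
  -- moments of ν
  have hws : Summable (fun k : ℕ => (k:ℝ) * (φ ^ k / (gFact g k * Zfun g φ))) := by
    have h := (summable_mean hΓm hg0 hg hφ).div_const (Zfun g φ)
    refine h.congr fun k => ?_
    rw [div_div, mul_div_assoc]
  have hsqs : Summable (fun k : ℕ => ((k:ℝ))^2 * (φ ^ k / (gFact g k * Zfun g φ))) := by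
    have h := (summable_sq hΓm hg0 hg hφ).div_const (Zfun g φ)
    refine h.congr fun k => ?_
    rw [div_div, mul_div_assoc]
  obtain ⟨hint_mean, hI_mean⟩ := nu_integral hgf hZ hφ
    (f := fun k => (k:ℝ)) (fun k => Nat.cast_nonneg k) hws
  obtain ⟨hint_sq, hI_sq⟩ := nu_integral hgf hZ hφ
    (f := fun k => ((k:ℝ))^2) (fun k => sq_nonneg _) hsqs
  have hmean : ∫ k, (k:ℝ) ∂(nuMeasure g φ) = ρ := by
    rw [hI_mean, ← hR, Rfun, ← tsum_div_const]
    exact tsum_congr fun k => by rw [div_div, mul_div_assoc]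
  have hm2 : ∫ k, ((k:ℝ))^2 ∂(nuMeasure g φ) ≤ B := by
    rw [hI_sq]
    have hterm2 : ∀ k : ℕ, ((k:ℝ))^2 * (φ ^ k / (gFact g k * Zfun g φ))
        ≤ ((k:ℝ))^2 * ap ^ k / k.factorial := by
      intro k
      have h1 : φ ^ k / (gFact g k * Zfun g φ) ≤ φ ^ k / gFact g k := by
        have := pow_nonneg hφ k
        have := (hgf k)
        calc φ ^ k / (gFact g k * Zfun g φ) ≤ φ ^ k / (gFact g k * 1) := by gcongr
          _ = φ ^ k / gFact g k := by rw [mul_one]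
      have h2 : φ ^ k / gFact g k ≤ (φ / Γm) ^ k / k.factorial :=
        term_le hΓm hg0 hg hφ k
      have h3 : (φ / Γm) ^ k ≤ ap ^ k :=
        pow_le_pow_left₀ (div_nonneg hφ hΓm.le) hφΓ k
      calc ((k:ℝ))^2 * (φ ^ k / (gFact g k * Zfun g φ))
          ≤ ((k:ℝ))^2 * ((φ / Γm) ^ k / k.factorial) :=
            mul_le_mul_of_nonneg_left (h1.trans h2) (sq_nonneg _)
        _ ≤ ((k:ℝ))^2 * (ap ^ k / k.factorial) := by
            have hf : (0:ℝ) < (k.factorial : ℝ) := by positivity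
            exact mul_le_mul_of_nonneg_left
              (div_le_div_of_nonneg_right' h3 hf) (sq_nonneg _)
        _ = ((k:ℝ))^2 * ap ^ k / k.factorial := by rw [mul_div_assoc]
    calc ∑' k : ℕ, ((k:ℝ))^2 * (φ ^ k / (gFact g k * Zfun g φ))
        ≤ ∑' k : ℕ, ((k:ℝ))^2 * ap ^ k / k.factorial :=
          Summable.tsum_le_tsum hterm2 hsqs (summable_sq_pow_div_factorial hap)
      _ = S2 := hS2_def.symm
      _ ≤ B := by rw [hB_def]; linarith
  -- bound on the mgf of each X i
  have hexps : Summable (fun k : ℕ => Real.exp (-lam * k) *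
      (φ ^ k / (gFact g k * Zfun g φ))) := by
    have hws0 : Summable (fun k : ℕ => φ ^ k / (gFact g k * Zfun g φ)) := by
      have h := (summable_Zterm hΓm hg0 hg hφ (Γp := Γp)).div_const (Zfun g φ)
      refine h.congr fun k => ?_
      rw [div_div]
    refine Summable.of_nonneg_of_le (fun k => ?_) (fun k => ?_) hws0
    · have := hgf k
      positivity
    · have h1 : Real.exp (-lam * k) ≤ 1 := by
        rw [Real.exp_le_one_iff]
        have : (0:ℝ) ≤ lam * k := by positivity
        linarith
      have h2 : 0 ≤ φ ^ k / (gFact g k * Zfun g φ) :=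
        div_nonneg (pow_nonneg hφ k) (mul_nonneg (hgf k).le hZ.le)
      nlinarith
  obtain ⟨hint_exp, _⟩ := nu_integral hgf hZ hφ
    (f := fun k : ℕ => Real.exp (-lam * k)) (fun k => (Real.exp_pos _).le) hexps
  have I1 : Integrable (fun k : ℕ => lam * (k:ℝ)) (nuMeasure g φ) :=
    hint_mean.const_mul lam
  have I2 : Integrable (fun k : ℕ => lam^2 * ((k:ℝ))^2) (nuMeasure g φ) :=
    hint_sq.const_mul (lam^2)
  have I3 : Integrable (fun k : ℕ => 1 - lam * (k:ℝ)) (nuMeasure g φ) :=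
    (integrable_const 1).sub I1
  have hquad_int : Integrable
      (fun k : ℕ => 1 - lam * (k:ℝ) + lam^2 * ((k:ℝ))^2) (nuMeasure g φ) :=
    I3.add I2
  have hEexp : ∫ k, Real.exp (-lam * k) ∂(nuMeasure g φ)
      ≤ Real.exp (-lam * ρ + lam^2 * B) := by
    have h1 : ∫ k, Real.exp (-lam * k) ∂(nuMeasure g φ)
        ≤ ∫ k, (1 - lam * (k:ℝ) + lam^2 * ((k:ℝ))^2) ∂(nuMeasure g φ) := by
      refine integral_mono hint_exp hquad_int fun k => ?_
      have h := exp_neg_le_quad (x := lam * k) (by positivity)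
      calc Real.exp (-lam * k) = Real.exp (-(lam * k)) := by rw [neg_mul]
        _ ≤ 1 - lam * k + (lam * k)^2 := h
        _ = 1 - lam * (k:ℝ) + lam^2 * ((k:ℝ))^2 := by ring
    have h2 : ∫ k, (1 - lam * (k:ℝ) + lam^2 * ((k:ℝ))^2) ∂(nuMeasure g φ)
        = 1 - lam * ρ + lam^2 * (∫ k, ((k:ℝ))^2 ∂(nuMeasure g φ)) := by
      rw [integral_add I3 I2, integral_sub (integrable_const 1) I1,
        integral_const, integral_const_mul, integral_const_mul, hmean]
      simp
    have h3 : 1 - lam * ρ + lam^2 * (∫ k, ((k:ℝ))^2 ∂(nuMeasure g φ))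
        ≤ 1 - lam * ρ + lam^2 * B := by nlinarith
    have h4 : 1 - lam * ρ + lam^2 * B ≤ Real.exp (-lam * ρ + lam^2 * B) := by
      have := Real.add_one_le_exp (-lam * ρ + lam^2 * B)
      linarith
    linarith
  -- mgf bound
  set Xr : Fin n → Ω → ℝ := fun i ω => (X i ω : ℝ) with hXr_def
  have hXrm : ∀ i, Measurable (Xr i) := fun i =>
    (measurable_of_countable (fun k : ℕ => (k:ℝ))).comp (hXm i)
  have hmgf : ∀ i, mgf (Xr i) P (-lam) ≤ Real.exp (-lam * ρ + lam^2 * B) := by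
    intro i
    have hmm : mgf (Xr i) P (-lam) = ∫ k, Real.exp (-lam * k) ∂(nuMeasure g φ) := by
      rw [← hXmap i, integral_map (hXm i).aemeasurable
        (measurable_of_countable (fun k : ℕ => Real.exp (-lam * k))).aestronglyMeasurable]
      rfl
    rw [hmm]
    exact hEexp
  -- independence and Chernoff
  have hXrInd : iIndepFun Xr P :=
    hXind.comp (fun _ (k : ℕ) => (k:ℝ)) (fun _ => measurable_of_countable _)
  have hSnonneg : ∀ ω, 0 ≤ (∑ i, Xr i) ω := by
    intro ω
    rw [Finset.sum_apply]
    exact Finset.sum_nonneg fun i _ => Nat.cast_nonneg _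
  have hSm : Measurable (∑ i, Xr i) := by
    have h : (∑ i, Xr i) = fun ω => ∑ i, Xr i ω := by
      funext ω
      exact Finset.sum_apply ω Finset.univ Xr
    rw [h]
    exact Finset.measurable_sum Finset.univ fun i _ => hXrm i
  have hSint : Integrable (fun ω => Real.exp (-lam * (∑ i, Xr i) ω)) P := by
    refine ⟨Measurable.aestronglyMeasurable ?_,
      HasFiniteIntegral.of_bounded (C := 1) (ae_of_all _ fun ω => ?_)⟩
    · exact (hSm.const_mul (-lam)).exp
    · rw [Real.norm_of_nonneg (Real.exp_pos _).le, Real.exp_le_one_iff]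
      have h := hSnonneg ω
      nlinarith
  have hchern := measure_le_le_exp_mul_mgf (μ := P) (X := ∑ i, Xr i)
    ((ρ - ε) * n) (neg_nonpos.mpr hlam0.le) hSint
  have hprod : mgf (∑ i, Xr i) P (-lam) = ∏ i, mgf (Xr i) P (-lam) :=
    hXrInd.mgf_sum hXrm Finset.univ
  have hprodle : ∏ i, mgf (Xr i) P (-lam) ≤ (Real.exp (-lam * ρ + lam^2 * B))^n := by
    calc ∏ i, mgf (Xr i) P (-lam)
        ≤ ∏ _i : Fin n, Real.exp (-lam * ρ + lam^2 * B) :=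
          Finset.prod_le_prod (fun i _ => mgf_nonneg) (fun i _ => hmgf i)
      _ = (Real.exp (-lam * ρ + lam^2 * B))^n := by
          rw [Finset.prod_const, Finset.card_univ, Fintype.card_fin]
  have hevent : {ω | ∑ i, (X i ω : ℝ) ≤ (ρ - ε) * n}
      = {ω | (∑ i, Xr i) ω ≤ (ρ - ε) * n} := by
    ext ω
    simp [Finset.sum_apply, hXr_def]
  rw [hevent]
  rw [ENNReal.le_ofReal_iff_toReal_le (measure_ne_top P _) (Real.exp_pos _).le]
  calc (P {ω | (∑ i, Xr i) ω ≤ (ρ - ε) * n}).toReal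
      ≤ Real.exp (-(-lam) * ((ρ - ε) * n)) * mgf (∑ i, Xr i) P (-lam) := hchern
    _ ≤ Real.exp (lam * ((ρ - ε) * n)) * (Real.exp (-lam * ρ + lam^2 * B))^n := by
        rw [neg_neg, hprod]
        exact mul_le_mul_of_nonneg_left hprodle (Real.exp_pos _).le
    _ = Real.exp (lam * ((ρ - ε) * n) + n * (-lam * ρ + lam^2 * B)) := by
        rw [← Real.exp_nat_mul, ← Real.exp_add]
    _ ≤ Real.exp (-(1 / (4 * B)) * ε ^ 2 * n) := by
        rw [Real.exp_le_exp]
        have hexpand : lam * ((ρ - ε) * n) + n * (-lam * ρ + lam^2 * B)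
            = (-lam * ε + lam^2 * B) * n := by ring
        rw [hexpand, hlam_def]
        have h5 : -(ε / (2 * B)) * ε + (ε / (2 * B))^2 * B = -(1 / (4 * B)) * ε ^ 2 := by
          field_simp
          ring
        rw [h5]
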